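/- For every point D in the group of points of C, writing (u1,u2) = l(D) and (y1,y2) = l(D + D1), the relation (u1² − d·u2²)·y2² = (u1² − u2²)·y1² holds. (Equivalently, in affine coordinates U = u2/u1, Y = y2/y1 this is the Edwards curve equation U² + Y² = 1 + d·U²Y².) -/

import Mathlib

open WeierstrassCurve

/-- The elliptic curve `C : y² = x(x² + 2(1+d)x + (1−d)²)` in Weierstrass form. -/
def edwardsWeierstrass {K : Type*} [Field K] (d : K) : WeierstrassCurve.Affine K :=
  { a₁ := 0, a₂ := 2 * (1 + d), a₃ := 0, a₄ := (1 - d) ^ 2, a₆ := 0 }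

/-- The Kummer-line coordinates `l(P) = (l₁(P), l₂(P))`: `l(O) = (1,1)` and
`l((x,y)) = (x + 1 - d, x - 1 + d)`. -/
def kummerLine {K : Type*} [Field K] (d : K) : (edwardsWeierstrass d).Point → K × K
  | Affine.Point.zero => (1, 1)
  | Affine.Point.some x _ _ => (x + 1 - d, x - 1 + d)

open Classical in
/-- For every point `D` on `C`, with `(u1,u2) = l(D)` and
`(y1,y2) = l(D + D1)`, the Edwards relation
`(u1² − d u2²) y2² = (u1² − u2²) y1²` holds. -/
theorem stmt_11 {K : Type*} [Field K] (hchar : (2 : K) ≠ 0) (d : K)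
    (hd0 : d ≠ 0) (hd1 : d ≠ 1)
    (hD1 : (edwardsWeierstrass d).Nonsingular (1 - d) (2 * (1 - d)))
    (D : (edwardsWeierstrass d).Point) :
    ((kummerLine d D).1 ^ 2 - d * (kummerLine d D).2 ^ 2) *
        (kummerLine d (D + Affine.Point.some _ _ hD1)).2 ^ 2 =
      ((kummerLine d D).1 ^ 2 - (kummerLine d D).2 ^ 2) *
        (kummerLine d (D + Affine.Point.some _ _ hD1)).1 ^ 2 := by
  have hd1' : (1 : K) - d ≠ 0 := sub_ne_zero.mpr (Ne.symm hd1)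
  rcases D with _ | @⟨x, y, h⟩
  · rw [show (Affine.Point.zero : (edwardsWeierstrass d).Point) = 0 from rfl, zero_add]
    simp only [kummerLine]
    ring
  · have heq : y ^ 2 = x ^ 3 + 2 * (1 + d) * x ^ 2 + (1 - d) ^ 2 * x := by
      have := ((edwardsWeierstrass d).equation_iff x y).mp h.1
      simpa [edwardsWeierstrass] using this
    by_cases hx : x = 1 - d
    · subst hx
      have hy2 : (y - 2 * (1 - d)) * (y + 2 * (1 - d)) = 0 := by
        linear_combination heq
      rcases mul_eq_zero.mp hy2 with hy | hy
      · -- y = 2(1-d): D = D1, D + D1 = (0,0)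
        have hy' : y = 2 * (1 - d) := sub_eq_zero.mp hy
        have hne : y ≠ (edwardsWeierstrass d).negY (1 - d) (2 * (1 - d)) := by
          simp only [Affine.negY, edwardsWeierstrass, hy']
          intro hcon
          exact (mul_ne_zero (mul_ne_zero hchar hchar) hd1') (by linear_combination hcon)
        have hden : y - (edwardsWeierstrass d).negY (1 - d) y ≠ 0 := by
          simp only [Affine.negY, edwardsWeierstrass, hy']
          intro hcon
          exact (mul_ne_zero (mul_ne_zero hchar hchar) hd1') (by linear_combination hcon)
        have hslope : (edwardsWeierstrass d).slope (1 - d) (1 - d) y (2 * (1 - d)) = 2 := by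
          rw [Affine.slope_of_Y_ne rfl hne]
          rw [div_eq_iff hden]
          simp only [edwardsWeierstrass, Affine.negY, hy']
          ring
        rw [Affine.Point.add_of_Y_ne hne]
        simp only [kummerLine, Affine.addX, hslope]
        simp only [edwardsWeierstrass]
        ring
      · -- y = -2(1-d): D = -D1, D + D1 = 0
        have hy' : y = -(2 * (1 - d)) := eq_neg_of_add_eq_zero_left hy
        have hne : y = (edwardsWeierstrass d).negY (1 - d) (2 * (1 - d)) := by
          simp only [Affine.negY, edwardsWeierstrass, hy']
          ring
        rw [Affine.Point.add_of_Y_eq rfl hne]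
        simp only [kummerLine]
        ring
    · -- generic case: x ≠ 1 - d
      have ht : x - (1 - d) ≠ 0 := sub_ne_zero.mpr hx
      rw [Affine.Point.add_of_X_ne hx]
      simp only [kummerLine]
      set x3 := (edwardsWeierstrass d).addX x (1 - d)
        ((edwardsWeierstrass d).slope x (1 - d) y (2 * (1 - d))) with hx3def
      have hX3 : x3 * (x - (1 - d)) ^ 2 =
          (y - 2 * (1 - d)) ^ 2 - (2 * (1 + d) + x + (1 - d)) * (x - (1 - d)) ^ 2 := by
        rw [hx3def, Affine.addX, Affine.slope_of_X_ne hx]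
        simp only [edwardsWeierstrass]
        field_simp
        ring
      have H : (((x + 1 - d) ^ 2 - d * (x - 1 + d) ^ 2) * (x3 - 1 + d) ^ 2) * (x - (1 - d)) ^ 4 =
          (((x + 1 - d) ^ 2 - (x - 1 + d) ^ 2) * (x3 + 1 - d) ^ 2) * (x - (1 - d)) ^ 4 := by
        linear_combination
          ((((x + 1 - d) ^ 2 - d * (x - 1 + d) ^ 2) *
              (x3 * (x - (1 - d)) ^ 2 +
                ((y - 2 * (1 - d)) ^ 2 - (2 * (1 + d) + x + (1 - d)) * (x - (1 - d)) ^ 2) -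
                2 * (1 - d) * (x - (1 - d)) ^ 2)) -
            (((x + 1 - d) ^ 2 - (x - 1 + d) ^ 2) *
              (x3 * (x - (1 - d)) ^ 2 +
                ((y - 2 * (1 - d)) ^ 2 - (2 * (1 + d) + x + (1 - d)) * (x - (1 - d)) ^ 2) +
                2 * (1 - d) * (x - (1 - d)) ^ 2))) * hX3 +
          ((16) + (-8) * y^1 + (1) * y^2 + (-33) * x^1 + (16) * x^1 * y^1 + (-2) * x^1 * y^2 +
            (16) * x^2 + (-8) * x^2 * y^1 + (1) * x^2 * y^2 + (2) * x^3 + (-1) * x^5 +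
            (-80) * d^1 + (32) * d^1 * y^1 + (-3) * d^1 * y^2 + (133) * d^1 * x^1 +
            (-48) * d^1 * x^1 * y^1 + (4) * d^1 * x^1 * y^2 + (-52) * d^1 * x^2 +
            (16) * d^1 * x^2 * y^1 + (-1) * d^1 * x^2 * y^2 + (2) * d^1 * x^3 +
            (-4) * d^1 * x^4 + (1) * d^1 * x^5 + (160) * d^2 + (-48) * d^2 * y^1 +
            (3) * d^2 * y^2 + (-202) * d^2 * x^1 + (48) * d^2 * x^1 * y^1 +
            (-2) * d^2 * x^1 * y^2 + (60) * d^2 * x^2 + (-8) * d^2 * x^2 * y^1 +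
            (-10) * d^2 * x^3 + (4) * d^2 * x^4 + (-160) * d^3 + (32) * d^3 * y^1 +
            (-1) * d^3 * y^2 + (138) * d^3 * x^1 + (-16) * d^3 * x^1 * y^1 +
            (-28) * d^3 * x^2 + (6) * d^3 * x^3 + (80) * d^4 + (-8) * d^4 * y^1 +
            (-37) * d^4 * x^1 + (4) * d^4 * x^2 + (-16) * d^5 + (1) * d^5 * x^1) * heq
      exact mul_right_cancel₀ (pow_ne_zero 4 ht) H
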